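/- Reparameterization by calibrated beliefs preserves the distribution: for a calibrated clique tree where each clique belief β(C) is the max-marginal of P and each sepset belief μ(S) is the max-marginal of P onto S, the product ∏_C β(C) / ∏_S μ(S) over cliques and sepsets of the tree equals P, provided P factorizes according to the clique tree. -/

import Mathlib

set_option linter.unusedSectionVars false
set_option linter.unusedVariables false


/-- `maxOver D A f` maximizes `f` over all assignments to the variables in `A`. -/
noncomputable def maxOver {V : Type*} (D : V → Type*) (A : Finset V)
    (f : (∀ v, D v) → ℝ) : (∀ v, D v) → ℝ :=
  fun x => ⨆ y : {y : ∀ v, D v // ∀ v ∉ A, y v = x v}, f y.1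

/-- Running intersection property. -/
def RIP {ι V : Type*} (G : SimpleGraph ι) (C : ι → Finset V) : Prop :=
  ∀ (v : V) (a b : ι) (ha : v ∈ C a) (hb : v ∈ C b),
    (G.induce {t | v ∈ C t}).Reachable ⟨a, ha⟩ ⟨b, hb⟩

section MaxOver
variable {V : Type*} [Fintype V] [DecidableEq V] {D : V → Type*}
    [∀ v, Fintype (D v)] [∀ v, Nonempty (D v)]
    {A B : Finset V} {f g h : (∀ v, D v) → ℝ} {x : ∀ v, D v}

instance instNE (x : ∀ v, D v) (A : Finset V) :
    Nonempty {y : ∀ v, D v // ∀ v ∉ A, y v = x v} := ⟨⟨x, fun _ _ => rfl⟩⟩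

theorem le_maxOver (y : ∀ v, D v) (hy : ∀ v ∉ A, y v = x v) :
    f y ≤ maxOver D A f x := by
  exact le_ciSup (f := fun y : {y : ∀ v, D v // ∀ v ∉ A, y v = x v} => f y.1)
    (Set.Finite.bddAbove (Set.finite_range _)) ⟨y, hy⟩

theorem self_le_maxOver : f x ≤ maxOver D A f x := le_maxOver x (fun _ _ => rfl)

theorem maxOver_le {c : ℝ} (hc : ∀ y : ∀ v, D v, (∀ v ∉ A, y v = x v) → f y ≤ c) :
    maxOver D A f x ≤ c :=
  ciSup_le fun y => hc y.1 y.2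

theorem exists_maxOver_eq :
    ∃ y : ∀ v, D v, (∀ v ∉ A, y v = x v) ∧ maxOver D A f x = f y := by
  obtain ⟨y, hy⟩ := Finite.exists_max
    (fun y : {y : ∀ v, D v // ∀ v ∉ A, y v = x v} => f y.1)
  exact ⟨y.1, y.2, le_antisymm (ciSup_le hy) (le_maxOver y.1 y.2)⟩

theorem maxOver_pos (hf : ∀ y, 0 < f y) : 0 < maxOver D A f x :=
  lt_of_lt_of_le (hf x) self_le_maxOver
end MaxOver

section Scope
variable {V : Type*} [Fintype V] [DecidableEq V] {D : V → Type*}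
    [∀ v, Fintype (D v)] [∀ v, Nonempty (D v)]
    {A B T Tg Th : Finset V} {f g h : (∀ v, D v) → ℝ} {x : ∀ v, D v}

/-- `f` depends only on the variables in `T`. -/
def HasScope (f : (∀ v, D v) → ℝ) (T : Finset V) : Prop :=
  ∀ x y, (∀ v ∈ T, x v = y v) → f x = f y

theorem HasScope.mono (hf : HasScope f T) (hTB : T ⊆ B) : HasScope f B :=
  fun x y hxy => hf x y fun v hv => hxy v (hTB hv)

theorem HasScope.prod {κ : Type*} (s : Finset κ) (φ : κ → (∀ v, D v) → ℝ)
    (hφ : ∀ k ∈ s, HasScope (φ k) T) :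
    HasScope (fun x => ∏ k ∈ s, φ k x) T := by
  intro x y hxy
  exact Finset.prod_congr rfl fun k hk => hφ k hk x y hxy

theorem maxOver_eq_self_of_disjoint (hf : HasScope f T) (hd : ∀ v ∈ T, v ∉ B) :
    maxOver D B f x = f x := by
  refine le_antisymm (maxOver_le fun y hy => ?_) self_le_maxOver
  exact le_of_eq (hf y x fun v hv => hy v (hd v hv))

theorem maxOver_maxOver :
    maxOver D A (maxOver D B f) x = maxOver D (A ∪ B) f x := by
  refine le_antisymm (maxOver_le fun y hy => maxOver_le fun z hz => ?_)
    (maxOver_le fun z hz => ?_)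
  · refine le_maxOver z fun v hv => ?_
    rw [Finset.mem_union] at hv; push_neg at hv
    rw [hz v hv.2, hy v hv.1]
  · calc f z ≤ maxOver D B f (fun v => if v ∈ A then z v else x v) := by
          refine le_maxOver z fun v hv => ?_
          by_cases hA : v ∈ A
          · simp [hA]
          · simp only [hA, if_false]
            exact hz v (by simp [hA, hv])
        _ ≤ maxOver D A (maxOver D B f) x := by
          refine le_maxOver _ fun v hv => by simp [hv]

theorem HasScope.maxOver' (hf : HasScope f T) : HasScope (maxOver D B f) (T \ B) := by
  have key : ∀ x y : ∀ v, D v, (∀ v ∈ T \ B, x v = y v) →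
      maxOver D B f x ≤ maxOver D B f y := by
    intro x y hxy
    refine maxOver_le fun z hz => ?_
    calc f z = f (fun v => if v ∈ B then z v else y v) := by
          refine hf _ _ fun v hv => ?_
          by_cases hB : v ∈ B
          · simp [hB]
          · simp only [hB, if_false]
            rw [hz v hB]
            exact hxy v (Finset.mem_sdiff.2 ⟨hv, hB⟩)
      _ ≤ maxOver D B f y := le_maxOver _ fun v hv => by simp [hv]
  exact fun x y hxy => le_antisymm (key x y hxy) (key y x fun v hv => (hxy v hv).symm)

theorem maxOver_inter_scope (hf : HasScope f T) :
    maxOver D A f x = maxOver D (A ∩ T) f x := by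
  refine le_antisymm (maxOver_le fun y hy => ?_) (maxOver_le fun y hy => ?_)
  · calc f y = f (fun v => if v ∈ A ∩ T then y v else x v) := by
          refine hf _ _ fun v hv => ?_
          by_cases hAT : v ∈ A ∩ T
          · simp [hAT]
          · simp only [hAT, if_false]
            exact hy v fun hA => hAT (Finset.mem_inter.2 ⟨hA, hv⟩)
      _ ≤ maxOver D (A ∩ T) f x := le_maxOver _ fun v hv => by simp [hv]
  · exact le_maxOver y fun v hv => hy v fun hAT => hv (Finset.mem_inter.1 hAT).1

theorem maxOver_mul_const (hh : HasScope h T) (hd : ∀ v ∈ T, v ∉ A)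
    (hh0 : ∀ y, 0 ≤ h y) :
    maxOver D A (fun y => f y * h y) x = maxOver D A f x * h x := by
  have hconst : ∀ y : ∀ v, D v, (∀ v ∉ A, y v = x v) → h y = h x :=
    fun y hy => hh y x fun v hv => hy v (hd v hv)
  refine le_antisymm (maxOver_le fun y hy => ?_) ?_
  · rw [hconst y hy]
    exact mul_le_mul_of_nonneg_right (le_maxOver y hy) (hh0 x)

  · obtain ⟨y, hy, hEq⟩ := exists_maxOver_eq (f := f) (A := A) (x := x)
    rw [hEq, ← hconst y hy]
    exact le_maxOver (f := fun y => f y * h y) y hy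

theorem maxOver_mul_of_disjoint (hg : HasScope g Tg) (hh : HasScope h Th)
    (hg0 : ∀ y, 0 ≤ g y) (hh0 : ∀ y, 0 ≤ h y)
    (hd : ∀ v ∈ Tg, v ∈ Th → v ∉ A) :
    maxOver D A (fun y => g y * h y) x = maxOver D A g x * maxOver D A h x := by
  refine le_antisymm (maxOver_le fun y hy => ?_) ?_
  · exact mul_le_mul (le_maxOver y hy) (le_maxOver y hy) (hh0 y)
      (le_trans (hg0 x) self_le_maxOver)
  · obtain ⟨y₁, hy₁, hEq₁⟩ := exists_maxOver_eq (f := g) (A := A) (x := x)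
    obtain ⟨y₂, hy₂, hEq₂⟩ := exists_maxOver_eq (f := h) (A := A) (x := x)
    set z : ∀ v, D v := fun v => if v ∈ A ∩ Tg then y₁ v else y₂ v with hz
    have hzx : ∀ v ∉ A, z v = x v := by
      intro v hv
      simp only [hz]
      rw [if_neg (fun hmem => hv (Finset.mem_inter.1 hmem).1)]
      exact hy₂ v hv
    have hgz : g z = g y₁ := by
      refine hg _ _ fun v hv => ?_
      by_cases hA : v ∈ A ∩ Tg
      · simp only [hz]; rw [if_pos hA]
      · simp only [hz]; rw [if_neg hA]
        rw [hy₂ v, hy₁ v] <;> intro hAv <;> exact hA (Finset.mem_inter.2 ⟨hAv, hv⟩)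
    have hhz : h z = h y₂ := by
      refine hh _ _ fun v hv => ?_
      simp only [hz]
      rw [if_neg]
      intro hmem
      obtain ⟨hA, hTg⟩ := Finset.mem_inter.1 hmem
      exact hd v hTg hv hA
    rw [hEq₁, hEq₂, ← hgz, ← hhz]
    exact le_maxOver (f := fun y => g y * h y) z hzx
end Scope

section Graph
variable {α : Type*}

/-- Walks in an induced subgraph correspond to walks in `G` with support in the set. -/
theorem reachable_induce_iff (G : SimpleGraph α) (S : Set α) (a b : ↥S) :
    (G.induce S).Reachable a b ↔
      ∃ w : G.Walk a.1 b.1, ∀ t ∈ w.support, t ∈ S := by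
  constructor
  · rintro ⟨w⟩
    induction w with
    | nil => exact ⟨SimpleGraph.Walk.nil, by
        rintro t ht; simp at ht; subst ht; exact Subtype.coe_prop _⟩
    | @cons u c d h p ih =>
      obtain ⟨w, hw⟩ := ih
      refine ⟨SimpleGraph.Walk.cons h w, ?_⟩
      intro t ht
      replace ht := List.mem_cons.1 ht
      rcases ht with rfl | ht
      · exact u.2
      · exact hw t ht
  · rintro ⟨w, hw⟩
    have key : ∀ (u v' : α) (w : G.Walk u v') (hu : u ∈ S) (hv : v' ∈ S),
        (∀ t ∈ w.support, t ∈ S) → (G.induce S).Reachable ⟨u, hu⟩ ⟨v', hv⟩ := by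
      intro u v' w
      induction w with
      | nil => intro hu hv _; exact SimpleGraph.Reachable.refl _
      | @cons u c d h p ih =>
        intro hu hv hsup
        have hc : c ∈ S := hsup c (by simp [SimpleGraph.Walk.support_cons])
        have hrest : ∀ t ∈ p.support, t ∈ S := fun t ht =>
          hsup t (by simp [SimpleGraph.Walk.support_cons, ht])
        exact SimpleGraph.Reachable.trans
          ⟨SimpleGraph.Walk.cons (by exact h : (G.induce S).Adj ⟨u, hu⟩ ⟨c, hc⟩)
            SimpleGraph.Walk.nil⟩ (ih hc hv hrest)
    exact key a.1 b.1 w a.2 b.2 hw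

/-- If `i` has a unique neighbor, walks between other vertices can avoid `i`. -/
theorem walk_avoid_leaf (G : SimpleGraph α) {i j : α}
    (hleaf : ∀ k, G.Adj i k → k = j) {a b : α} (ha : a ≠ i) (hb : b ≠ i)
    (w : G.Walk a b) :
    ∃ w' : G.Walk a b, (∀ t ∈ w'.support, t ∈ w.support) ∧ i ∉ w'.support := by
  suffices H : ∀ n (a : α), a ≠ i → ∀ w : G.Walk a b, w.length ≤ n →
      ∃ w' : G.Walk a b, (∀ t ∈ w'.support, t ∈ w.support) ∧ i ∉ w'.support by
    exact H w.length a ha w le_rfl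
  intro n
  induction n with
  | zero =>
    intro a ha w hlen
    cases w with
    | nil => exact ⟨SimpleGraph.Walk.nil, by simp, by simp [Ne.symm ha]⟩
    | cons h p => simp [SimpleGraph.Walk.length_cons] at hlen
  | succ n ih =>
    intro a ha w hlen
    cases w with
    | nil => exact ⟨SimpleGraph.Walk.nil, by simp, by simp [Ne.symm ha]⟩
    | @cons _ c _ h p =>
      by_cases hc : c = i
      · have haj : a = j := hleaf a (hc ▸ h.symm)
        cases p with
        | nil => exact absurd hc hb
        | @cons _ d _ h2 p2 =>
          have hda : d = a := (hleaf d (hc ▸ h2)).trans haj.symm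
          obtain ⟨w', hw1, hw2⟩ := ih d (fun hdi => ha (hda.symm.trans hdi)) p2 (by
            simp [SimpleGraph.Walk.length_cons] at hlen; omega)
          refine ⟨w'.copy hda rfl, fun t ht => ?_, ?_⟩
          · rw [SimpleGraph.Walk.support_copy] at ht
            simp only [SimpleGraph.Walk.support_cons, List.mem_cons]
            exact Or.inr (Or.inr (hw1 t ht))
          · rw [SimpleGraph.Walk.support_copy]
            exact hw2
      · obtain ⟨w', hw1, hw2⟩ := ih c hc p (by
          simp [SimpleGraph.Walk.length_cons] at hlen; omega)
        refine ⟨SimpleGraph.Walk.cons h w', fun t ht => ?_, ?_⟩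
        · rw [SimpleGraph.Walk.support_cons, List.mem_cons] at ht ⊢
          exact ht.imp id (hw1 t)
        · rw [SimpleGraph.Walk.support_cons, List.mem_cons]
          rintro (rfl | hmem)
          · exact ha rfl
          · exact hw2 hmem
end Graph

section Leaf
variable {ι : Type*} [Fintype ι] [DecidableEq ι]

theorem tree_exists_leaf (G : SimpleGraph ι) [DecidableRel G.Adj] (hT : G.IsTree)
    (h2 : 2 ≤ Fintype.card ι) :
    ∃ i j, G.Adj i j ∧ ∀ k, G.Adj i k → k = j := by
  have hedge : Finset.card G.edgeFinset + 1 = Fintype.card ι := hT.card_edgeFinset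
  have hsum : ∑ v, G.degree v = 2 * Finset.card G.edgeFinset :=
    SimpleGraph.sum_degrees_eq_twice_card_edges G
  -- there is a vertex of degree ≤ 1
  have hlow : ∃ i, G.degree i ≤ 1 := by
    by_contra hcon
    push_neg at hcon
    have : 2 * Fintype.card ι ≤ ∑ v, G.degree v := by
      calc 2 * Fintype.card ι = ∑ _v : ι, 2 := by
            rw [Finset.sum_const, smul_eq_mul, mul_comm, Fintype.card]
        _ ≤ ∑ v, G.degree v := Finset.sum_le_sum fun v _ => hcon v
    omega
  obtain ⟨i, hi⟩ := hlow
  -- degree at least one since connected with ≥ 2 vertices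
  have hpos : 0 < G.degree i := by
    rw [SimpleGraph.degree_pos_iff_exists_adj]
    obtain ⟨k, hk⟩ := Fintype.exists_ne_of_one_lt_card (by omega) i
    obtain ⟨w⟩ := hT.isConnected.preconnected i k
    cases w with
    | nil => exact absurd rfl hk.symm
    | cons h p => exact ⟨_, h⟩
  have hdeg : G.degree i = 1 := le_antisymm hi hpos
  rw [← SimpleGraph.card_neighborFinset_eq_degree, Finset.card_eq_one] at hdeg
  obtain ⟨j, hj⟩ := hdeg
  refine ⟨i, j, ?_, fun k hk => ?_⟩
  · have : j ∈ G.neighborFinset i := by rw [hj]; exact Finset.mem_singleton_self j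
    exact (SimpleGraph.mem_neighborFinset G i j).1 this
  · have : k ∈ G.neighborFinset i := (SimpleGraph.mem_neighborFinset G i k).2 hk
    rw [hj, Finset.mem_singleton] at this
    exact this
end Leaf

section Lift
variable {α : Type*}

theorem walk_induce_lift (G : SimpleGraph α) (S : Set α) :
    ∀ {u v : α} (w : G.Walk u v), (∀ t ∈ w.support, t ∈ S) →
      ∀ (hu : u ∈ S) (hv : v ∈ S),
      ∃ w₂ : (G.induce S).Walk ⟨u, hu⟩ ⟨v, hv⟩, ∀ t ∈ w₂.support, t.1 ∈ w.support := by
  intro u v w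
  induction w with
  | nil =>
    intro _ hu hv
    exact ⟨SimpleGraph.Walk.nil, by simp⟩
  | @cons u c d h p ih =>
    intro hsup hu hv
    have hc : c ∈ S := hsup c (by simp [SimpleGraph.Walk.support_cons])
    obtain ⟨w₂, hw₂⟩ := ih (fun t ht => hsup t (by
      simp [SimpleGraph.Walk.support_cons, ht])) hc hv
    refine ⟨SimpleGraph.Walk.cons (by exact h) w₂, ?_⟩
    intro t ht
    replace ht := List.mem_cons.1 ht
    rcases ht with rfl | ht
    · simp [SimpleGraph.Walk.support_cons]
    · simp only [SimpleGraph.Walk.support_cons, List.mem_cons]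
      exact Or.inr (hw₂ t ht)
end Lift

/-- The sepset of an edge. -/
def sepOf {ι V : Type*} [DecidableEq V] (Cl : ι → Finset V) : Sym2 ι → Finset V :=
  Sym2.lift ⟨fun a b => Cl a ∩ Cl b, fun a b => Finset.inter_comm _ _⟩

set_option maxHeartbeats 1000000 in
theorem aux_reparam.{u_ι} {V : Type*} [Fintype V] [DecidableEq V] {D : V → Type*}
    [∀ v, Fintype (D v)] [∀ v, Nonempty (D v)] :
    ∀ (n : ℕ) {ι : Type u_ι} [Fintype ι] [DecidableEq ι]
      (G : SimpleGraph ι) [DecidableRel G.Adj], Fintype.card ι = n →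
      ∀ (_hT : G.IsTree) (Cl : ι → Finset V) (_hRIP : RIP G Cl)
        (P : (∀ v, D v) → ℝ) (_hP : ∀ x, 0 < P x)
        (_hfact : ∃ (κ : Type) (_ : Fintype κ) (φ : κ → (∀ v, D v) → ℝ) (asg : κ → ι),
          (∀ k, HasScope (φ k) (Cl (asg k))) ∧ (∀ k x, 0 ≤ φ k x) ∧
          (∀ x, P x = ∏ k, φ k x))
        (x : ∀ v, D v),
        (∏ i, maxOver D (Finset.univ \ Cl i) P x) /
          (∏ e ∈ G.edgeFinset, maxOver D (Finset.univ \ sepOf Cl e) P x) = P x := by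
  intro n
  induction n using Nat.strong_induction_on with
  | _ n ih =>
  intro ι _ _ G _ hcard hT Cl hRIP P hP hfact x
  obtain ⟨κ, _, φ, asg, hSc, hNn, hProd⟩ := hfact
  have hne : Nonempty ι := hT.isConnected.nonempty
  rcases le_or_gt n 1 with h1 | h2
  · -- base case : exactly one vertex
    have hcard1 : Fintype.card ι = 1 := le_antisymm (hcard ▸ h1) Fintype.card_pos
    obtain ⟨i, hall⟩ := Fintype.card_eq_one_iff.1 hcard1
    have hedge : G.edgeFinset = ∅ := by
      rw [Finset.eq_empty_iff_forall_notMem]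
      intro e he
      induction e with
      | h a b =>
        rw [SimpleGraph.mem_edgeFinset] at he
        exact G.ne_of_adj he ((hall a).trans (hall b).symm)
    have hPSc : HasScope P (Cl i) := by
      intro y z hyz
      rw [hProd, hProd]
      exact Finset.prod_congr rfl fun k _ => hSc k y z (by rw [hall (asg k)] at *; exact hyz)
    rw [hedge, Finset.prod_empty]
    rw [Fintype.prod_eq_single i (fun k hk => absurd (hall k) hk)]
    rw [maxOver_eq_self_of_disjoint hPSc (fun v hv => by simp [hv])]
    exact div_one _
  · -- inductive step
    have h2' : 2 ≤ Fintype.card ι := hcard ▸ h2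
    obtain ⟨i, j, hAdj, hleaf⟩ := tree_exists_leaf G hT h2'
    have hij : i ≠ j := G.ne_of_adj hAdj
    -- the sepset
    set S : Finset V := Cl i ∩ Cl j with hS
    -- RIP consequence : variables of Cl i shared with other cliques are in Cl j
    have hsep : ∀ k, k ≠ i → ∀ v, v ∈ Cl k → v ∈ Cl i → v ∈ Cl j := by
      intro k hk v hvk hvi
      have := hRIP v i k hvi hvk
      rw [reachable_induce_iff] at this
      obtain ⟨w, hw⟩ := this
      cases w with
      | nil => exact absurd rfl (Ne.symm hk)
      | @cons _ c _ h p =>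
        have hc : c = j := hleaf c h
        have : v ∈ Cl c := hw c (by
          rw [SimpleGraph.Walk.support_cons]
          exact List.mem_cons_of_mem _ p.start_mem_support)
        exact hc ▸ this
    -- the factor decomposition at the leaf
    set ψ : (∀ v, D v) → ℝ := fun y => ∏ k ∈ Finset.univ.filter (fun k => asg k = i), φ k y
      with hψdef
    set Q : (∀ v, D v) → ℝ := fun y => ∏ k ∈ Finset.univ.filter (fun k => ¬(asg k = i)), φ k y
      with hQdef
    have hPψQ : ∀ y, P y = ψ y * Q y := by
      intro y
      rw [hProd]
      exact (Finset.prod_filter_mul_prod_filter_not Finset.univ _ _).symm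
    have hψnn : ∀ y, 0 ≤ ψ y := fun y => Finset.prod_nonneg fun k _ => hNn k y
    have hQnn : ∀ y, 0 ≤ Q y := fun y => Finset.prod_nonneg fun k _ => hNn k y
    have hψSc : HasScope ψ (Cl i) := by
      refine HasScope.prod _ _ fun k hk => ?_
      rw [Finset.mem_filter] at hk
      exact (hSc k).mono (by rw [hk.2])
    have hQout : ∀ k, ¬(asg k = i) → ∀ v ∈ Cl (asg k), v ∉ Cl i \ S := by
      intro k hk v hv hmem
      rw [Finset.mem_sdiff] at hmem
      exact hmem.2 (Finset.mem_inter.2 ⟨hmem.1, hsep (asg k) hk v hv hmem.1⟩)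
    have hQSc : HasScope Q (Finset.univ \ (Cl i \ S)) := by
      refine HasScope.prod _ _ fun k hk => ?_
      rw [Finset.mem_filter] at hk
      refine (hSc k).mono fun v hv => ?_
      rw [Finset.mem_sdiff]
      exact ⟨Finset.mem_univ v, hQout k hk.2 v hv⟩
    set ψs : (∀ v, D v) → ℝ := maxOver D (Cl i \ S) ψ with hψs
    set Qb : (∀ v, D v) → ℝ := maxOver D (Finset.univ \ Cl i) Q with hQb
    set P' : (∀ v, D v) → ℝ := maxOver D (Cl i \ S) P with hP'def
    have hPfun : P = fun y => ψ y * Q y := funext hPψQ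
    -- (a) P' = ψs * Q
    have hP' : ∀ y, P' y = ψs y * Q y := by
      intro y
      rw [hP'def, hPfun]
      rw [maxOver_mul_const hQSc (fun v hv => (Finset.mem_sdiff.1 hv).2) hQnn]
    have hP'pos : ∀ y, 0 < P' y := fun y => maxOver_pos hP
    -- (b) the clique belief at the leaf
    have hβi : ∀ y, maxOver D (Finset.univ \ Cl i) P y = ψ y * Qb y := by
      intro y
      rw [hPfun]
      have : (fun y => ψ y * Q y) = fun y => Q y * ψ y := by ext y; ring
      rw [this, maxOver_mul_const hψSc (fun v hv hmem => (Finset.mem_sdiff.1 hmem).2 hv) hψnn]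
      ring
    -- (c) the sepset belief at the leaf edge
    have hsplit : ∀ y, maxOver D (Finset.univ \ S) P y =
        maxOver D (Finset.univ \ S) ψ y * maxOver D (Finset.univ \ S) Q y := by
      intro y
      rw [hPfun]
      refine maxOver_mul_of_disjoint hψSc hQSc hψnn hQnn ?_
      intro v hvi hvQ hvmem
      rw [Finset.mem_sdiff] at hvQ hvmem
      exact hvmem.2 (by
        by_contra hvS
        exact hvQ.2 (Finset.mem_sdiff.2 ⟨hvi, hvS⟩))
    have hsψ : ∀ y, maxOver D (Finset.univ \ S) ψ y = ψs y := by
      intro y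
      rw [maxOver_inter_scope hψSc]
      congr 1
      ext v
      simp only [Finset.mem_inter, Finset.mem_sdiff, Finset.mem_univ, true_and]
      tauto
    have hQid : maxOver D (Cl i \ S) Q = Q :=
      funext fun y => maxOver_eq_self_of_disjoint hQSc (fun v hv => (Finset.mem_sdiff.1 hv).2)
    have hsQ : ∀ y, maxOver D (Finset.univ \ S) Q y = Qb y := by
      intro y
      have hunion : (Finset.univ \ Cl i) ∪ (Cl i \ S) = Finset.univ \ S := by
        ext v
        simp only [Finset.mem_union, Finset.mem_sdiff, Finset.mem_univ, true_and, hS,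
          Finset.mem_inter]
        tauto
      rw [← hunion, ← maxOver_maxOver, hQid]
    have hνij : ∀ y, maxOver D (Finset.univ \ S) P y = ψs y * Qb y := by
      intro y
      rw [hsplit y, hsψ y, hsQ y]
    -- key identity
    have hkey : maxOver D (Finset.univ \ Cl i) P x * P' x
        = maxOver D (Finset.univ \ S) P x * P x := by
      rw [hβi x, hP' x, hνij x, hPψQ x]
      ring
    -- the reduced clique tree on the other vertices
    have hji : (j : ι) ≠ i := Ne.symm hij
    set T : Set ι := {k | k ≠ i} with hTdef
    set G' : SimpleGraph ↥T := G.induce T with hG'def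
    haveI : DecidableRel G'.Adj := fun a b => (inferInstance : Decidable (G.Adj a.1 b.1))
    have hcard' : Fintype.card ↥T = n - 1 := by
      have e1 : Fintype.card ↥T = Fintype.card {k : ι // ¬(k = i)} :=
        Fintype.card_congr (Equiv.subtypeEquivRight fun k => Iff.rfl)
      rw [e1, Fintype.card_subtype_compl, Fintype.card_subtype_eq, hcard]
    have hmemT : ∀ k : ι, k ≠ i → k ∈ T := fun k hk => hk
    -- the reduced graph is a tree
    have hT' : G'.IsTree := by
      obtain ⟨k, hk⟩ := Fintype.exists_ne_of_one_lt_card (by omega : 1 < Fintype.card ι) i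
      haveI : Nonempty ↥T := ⟨⟨k, hk⟩⟩
      constructor
      · constructor
        intro a b
        obtain ⟨w⟩ := hT.isConnected.preconnected a.1 b.1
        obtain ⟨w', _, hw2⟩ := walk_avoid_leaf G hleaf a.2 b.2 w
        rw [hG'def]
        rw [reachable_induce_iff G T a b]
        exact ⟨w', fun t ht => fun hti => hw2 (hti ▸ ht)⟩
      · intro v c hc
        have := hc.map (f := (SimpleGraph.Embedding.induce T).toHom) Subtype.val_injective
        exact hT.IsAcyclic _ this
    -- the restricted cliques satisfy RIP
    set Cl' : ↥T → Finset V := fun k => Cl k.1 with hCl'def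
    have hRIP' : RIP G' Cl' := by
      intro v a b ha hb
      have := hRIP v a.1 b.1 ha hb
      rw [reachable_induce_iff] at this
      obtain ⟨w, hw⟩ := this
      obtain ⟨w', hw1, hw2⟩ := walk_avoid_leaf G hleaf a.2 b.2 w
      rw [reachable_induce_iff]
      have hsupT : ∀ t ∈ w'.support, t ∈ T := fun t ht hti => hw2 (hti ▸ ht)
      obtain ⟨w₂, hw₂⟩ := walk_induce_lift G T w' hsupT a.2 b.2
      refine ⟨w₂, fun t ht => ?_⟩
      exact hw t.1 (hw1 t.1 (hw₂ t ht))
    -- factorization of P' over the reduced tree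
    have hψsSc : HasScope ψs (Cl j) := by
      refine (hψSc.maxOver').mono fun v hv => ?_
      rw [Finset.mem_sdiff, Finset.mem_sdiff] at hv
      have hvS : v ∈ S := by
        by_contra hvS
        exact hv.2 ⟨hv.1, hvS⟩
      exact (Finset.mem_inter.1 hvS).2
    have hψsnn : ∀ y, 0 ≤ ψs y := fun y => le_trans (hψnn y) self_le_maxOver
    have hfact' : ∃ (κ' : Type) (_ : Fintype κ') (φ' : κ' → (∀ v, D v) → ℝ)
        (asg' : κ' → ↥T),
        (∀ k, HasScope (φ' k) (Cl' (asg' k))) ∧ (∀ k y, 0 ≤ φ' k y) ∧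
        (∀ y, P' y = ∏ k, φ' k y) := by
      refine ⟨Unit ⊕ {k : κ // ¬(asg k = i)}, inferInstance,
        Sum.elim (fun _ => ψs) (fun k => φ k.1),
        Sum.elim (fun _ => ⟨j, hji⟩) (fun k => ⟨asg k.1, k.2⟩), ?_, ?_, ?_⟩
      · rintro (u | k)
        · exact hψsSc
        · exact hSc k.1
      · rintro (u | k) y
        · exact hψsnn y
        · exact hNn k.1 y
      · intro y
        rw [Fintype.prod_sum_type]
        have h1 : ∏ u : Unit, Sum.elim (fun _ => ψs) (fun k : {k : κ // ¬(asg k = i)} => φ k.1) (Sum.inl u) y = ψs y := by simp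
        have h2 : ∏ k : {k : κ // ¬(asg k = i)}, φ k.1 y = Q y :=
          (Finset.prod_subtype _ (fun k => by simp) (fun k => φ k y)).symm
        rw [h1]
        rw [hP' y, show (∏ k : {k : κ // ¬(asg k = i)},
          Sum.elim (fun _ => ψs) (fun k : {k : κ // ¬(asg k = i)} => φ k.1) (Sum.inr k) y)
          = ∏ k : {k : κ // ¬(asg k = i)}, φ k.1 y from rfl, h2]
    -- transfer of beliefs from P to P'
    have htrans : ∀ W : Finset V, (∀ v, v ∈ Cl i \ S → v ∉ W) →
        maxOver D (Finset.univ \ W) P' x = maxOver D (Finset.univ \ W) P x := by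
      intro W hW
      rw [hP'def, maxOver_maxOver]
      congr 1
      rw [Finset.union_eq_left]
      intro v hv
      rw [Finset.mem_sdiff]
      exact ⟨Finset.mem_univ v, hW v hv⟩
    have hclsub : ∀ k : ι, k ≠ i → ∀ v, v ∈ Cl i \ S → v ∉ Cl k := by
      intro k hk v hv hvk
      rw [Finset.mem_sdiff] at hv
      exact hv.2 (Finset.mem_inter.2 ⟨hv.1, hsep k hk v hvk hv.1⟩)
    -- apply the induction hypothesis
    have ihres := ih (n - 1) (by omega) G' hcard' hT' Cl' hRIP' P' hP'pos hfact' x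
    -- numerator decomposition
    have hnum : ∏ k : ι, maxOver D (Finset.univ \ Cl k) P x
        = maxOver D (Finset.univ \ Cl i) P x *
          ∏ k : ↥T, maxOver D (Finset.univ \ Cl' k) P' x := by
      rw [← Finset.mul_prod_erase Finset.univ _ (Finset.mem_univ i)]
      congr 1
      rw [Finset.prod_subtype (p := (· ∈ T)) (Finset.univ.erase i)
        (fun k => by simp [hTdef]) (fun k => maxOver D (Finset.univ \ Cl k) P x)]
      exact Finset.prod_congr rfl fun k _ => (htrans (Cl k.1) (hclsub k.1 k.2)).symm
    -- denominator decomposition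
    have hijmem : s(i, j) ∈ G.edgeFinset := SimpleGraph.mem_edgeFinset.2 hAdj
    have hsepij : sepOf Cl s(i, j) = S := rfl
    have hden2 : ∏ e ∈ G'.edgeFinset, maxOver D (Finset.univ \ sepOf Cl' e) P' x
        = ∏ e ∈ G.edgeFinset.erase s(i, j), maxOver D (Finset.univ \ sepOf Cl e) P x := by
      refine Finset.prod_bij (fun e _ => Sym2.map Subtype.val e) ?_ ?_ ?_ ?_
      · intro e he
        induction e with
        | h a b =>
          rw [SimpleGraph.mem_edgeFinset] at he
          rw [Finset.mem_erase]
          constructor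
          · intro hcon
            rw [Sym2.map_pair_eq, Sym2.eq_iff] at hcon
            rcases hcon with ⟨h1, _⟩ | ⟨_, h2⟩
            · exact a.2 h1
            · exact b.2 h2
          · exact SimpleGraph.mem_edgeFinset.2 he
      · intro e1 he1 e2 he2 heq
        exact Sym2.map.injective Subtype.val_injective heq
      · intro e he
        rw [Finset.mem_erase, SimpleGraph.mem_edgeFinset] at he
        obtain ⟨hne, hmem⟩ := he
        induction e with
        | h a b =>
          have hadj : G.Adj a b := hmem
          have ha : a ≠ i := by
            rintro rfl
            exact hne (by rw [hleaf b hadj])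
          have hb : b ≠ i := by
            rintro rfl
            have : a = j := hleaf a hadj.symm
            exact hne (by rw [this, Sym2.eq_swap])
          refine ⟨s(⟨a, ha⟩, ⟨b, hb⟩), ?_, ?_⟩
          · rw [SimpleGraph.mem_edgeFinset]
            exact hadj
          · rw [Sym2.map_pair_eq]
      · intro e he
        induction e with
        | h a b =>
          rw [Sym2.map_pair_eq]
          have hsep' : sepOf Cl' s(a, b) = Cl a.1 ∩ Cl b.1 := rfl
          have hsep'' : sepOf Cl s(a.1, b.1) = Cl a.1 ∩ Cl b.1 := rfl
          rw [hsep', hsep'']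
          refine htrans _ fun v hv hvmem => ?_
          exact hclsub a.1 a.2 v hv (Finset.mem_inter.1 hvmem).1
    -- putting everything together
    rw [hnum]
    rw [← Finset.mul_prod_erase _ _ hijmem, hsepij]
    set βi := maxOver D (Finset.univ \ Cl i) P x with hβidef
    set νij := maxOver D (Finset.univ \ S) P x with hνijdef
    set N := ∏ k : ↥T, maxOver D (Finset.univ \ Cl' k) P' x with hNdef
    set E := ∏ e ∈ G.edgeFinset.erase s(i, j), maxOver D (Finset.univ \ sepOf Cl e) P x
      with hEdef
    rw [hden2] at ihres
    have hEpos : 0 < E := by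
      rw [hEdef]
      refine Finset.prod_pos fun e _ => maxOver_pos hP
    have hνpos : 0 < νij := maxOver_pos hP
    have hN : N = P' x * E := by
      rw [← ihres, div_mul_cancel₀]
      exact ne_of_gt hEpos
    rw [hN]
    have hkey' : βi * P' x = νij * P x := hkey
    calc βi * (P' x * E) / (νij * E) = (βi * P' x) * E / (νij * E) := by ring_nf
      _ = (νij * P x) * E / (νij * E) := by rw [hkey']
      _ = P x := by
          rw [mul_comm νij (P x), mul_assoc]
          rw [mul_div_assoc, div_self (by positivity), mul_one]

/-- reparameterization by calibrated beliefs preserves the distribution: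
for a strictly positive `P` factorizing according to a valid clique tree, the product of
the clique beliefs (the max-marginals of `P` onto the cliques) divided by the product of
the sepset beliefs (the max-marginals of `P` onto the sepsets) equals `P`. -/
theorem reparameterization_preserves_distribution
    {V : Type*} [Fintype V] [DecidableEq V] {D : V → Type*}
    [∀ v, Fintype (D v)] [∀ v, Nonempty (D v)]
    {ι : Type*} [Fintype ι] [DecidableEq ι]
    (G : SimpleGraph ι) [DecidableRel G.Adj] (hT : G.IsTree)
    (Cl : ι → Finset V) (hRIP : RIP G Cl)
    (P : (∀ v, D v) → ℝ) (hP : ∀ x, 0 < P x)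
    -- P factorizes according to the clique tree: a product of factors, each with scope
    -- contained in some clique
    (hfact : ∃ (κ : Type) (_ : Fintype κ) (φ : κ → (∀ v, D v) → ℝ) (asg : κ → ι),
      (∀ k x y, (∀ v ∈ Cl (asg k), x v = y v) → φ k x = φ k y) ∧
      (∀ x, P x = ∏ k, φ k x))
    -- sepset beliefs: for each edge, the max-marginal of P onto the sepset
    (μ : Sym2 ι → (∀ v, D v) → ℝ)
    (hμ : ∀ i j, G.Adj i j →
      ∀ x, μ s(i, j) x = maxOver D (Finset.univ \ (Cl i ∩ Cl j)) P x) :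
    ∀ x, (∏ i, maxOver D (Finset.univ \ Cl i) P x) / (∏ e ∈ G.edgeFinset, μ e x)
      = P x := by
  intro x
  have hν : ∀ e ∈ G.edgeFinset, μ e x = maxOver D (Finset.univ \ sepOf Cl e) P x := by
    intro e he
    induction e with
    | h a b =>
      rw [SimpleGraph.mem_edgeFinset] at he
      exact hμ a b he x
  rw [Finset.prod_congr rfl hν]
  obtain ⟨κ, _, φ, asg, hscope, hprod⟩ := hfact
  exact aux_reparam (Fintype.card ι) G rfl hT Cl hRIP P hP
    ⟨κ, ‹_›, fun k y => |φ k y|, asg,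
      fun k y z hyz => congrArg abs (hscope k y z hyz),
      fun k y => abs_nonneg _,
      fun y => by show P y = ∏ k, |φ k y|; rw [← abs_of_pos (hP y), hprod y, Finset.abs_prod]⟩ x
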